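/- In the game G*: (i) for every payment function P : A × B → ℝ≥0, every Nash equilibrium (σ1, σ2) of the two-player game with utilities (u1 − P, u2 + P) gives Player 1 expected utility Σ_{a,b} σ1(a)σ2(b)(u1(a,b) − P(a,b)) at most 0; and (ii) for every σ ∈ Δ(A), the leader's value of the commitment (σ, 0) with the identically-zero payment function is at most 0. -/

import Mathlib

open Finset

noncomputable section

/-- A probability distribution on a finite type, given as a weight function. -/
def IsDist {X : Type*} [Fintype X] (σ : X → ℝ) : Prop :=
  (∀ x, 0 ≤ σ x) ∧ ∑ x, σ x = 1

/-- Follower's induced utility under commitment `(σ, P)` when playing `b`. -/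
def folU {A B : Type*} [Fintype A] (u2 : A → B → ℝ) (σ : A → ℝ) (P : A → B → ℝ) (b : B) : ℝ :=
  ∑ a, σ a * (u2 a b + P a b)

/-- Leader's utility under commitment `(σ, P)` when the follower plays `b`. -/
def leadU {A B : Type*} [Fintype A] (u1 : A → B → ℝ) (σ : A → ℝ) (P : A → B → ℝ) (b : B) : ℝ :=
  ∑ a, σ a * (u1 a b - P a b)

/-- The leader's value of the commitment `(σ, P)`: the follower plays an action maximizing
his induced utility, tiebreaking in favor of the leader. -/
def leaderValue {A B : Type*} [Fintype A] [Fintype B] (u1 u2 : A → B → ℝ)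
    (σ : A → ℝ) (P : A → B → ℝ) : ℝ :=
  sSup {x | ∃ b : B, (∀ b' : B, folU u2 σ P b' ≤ folU u2 σ P b) ∧ x = leadU u1 σ P b}

/-- Nash equilibrium of a finite two-player game: both strategies are distributions and
every action in each player's support is a best response against the other mixture. -/
def NashEq {A B : Type*} [Fintype A] [Fintype B] (u1 u2 : A → B → ℝ)
    (σ1 : A → ℝ) (σ2 : B → ℝ) : Prop :=
  IsDist σ1 ∧ IsDist σ2 ∧
  (∀ a : A, 0 < σ1 a → ∀ a' : A, ∑ b, σ2 b * u1 a' b ≤ ∑ b, σ2 b * u1 a b) ∧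
  (∀ b : B, 0 < σ2 b → ∀ b' : B, ∑ a, σ1 a * u2 a b' ≤ ∑ a, σ1 a * u2 a b)

/-- Leader's actions in the game G*. -/
inductive RA | Top | Bottom
  deriving DecidableEq

instance : Fintype RA :=
  ⟨{RA.Top, RA.Bottom}, fun x => by cases x <;> simp⟩

/-- Follower's actions in the game G*. -/
inductive CA | Left | Middle | Right
  deriving DecidableEq

instance : Fintype CA :=
  ⟨{CA.Left, CA.Middle, CA.Right}, fun x => by cases x <;> simp⟩

/-- Leader's utility in G*. -/
def u1s : RA → CA → ℝ
  | .Top, _ => -1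
  | .Bottom, .Left => 2
  | .Bottom, .Middle => 0
  | .Bottom, .Right => 0

/-- Follower's utility in G*. -/
def u2s : RA → CA → ℝ
  | .Top, .Left => 0
  | .Top, .Middle => -2
  | .Top, .Right => 0
  | .Bottom, .Left => 0
  | .Bottom, .Middle => 2
  | .Bottom, .Right => 1

lemma sumRA (f : RA → ℝ) : ∑ a, f a = f .Top + f .Bottom := by
  have h : (Finset.univ : Finset RA) = {RA.Top, RA.Bottom} := by decide
  rw [h]; simp [Finset.sum_pair]

lemma sumCA (f : CA → ℝ) : ∑ b, f b = f .Left + f .Middle + f .Right := by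
  have h : (Finset.univ : Finset CA) = {CA.Left, CA.Middle, CA.Right} := by decide
  rw [h]; simp; ring

theorem stmt3 :
    (∀ P : RA → CA → ℝ, (∀ a b, 0 ≤ P a b) →
      ∀ (σ1 : RA → ℝ) (σ2 : CA → ℝ),
        NashEq (fun a b => u1s a b - P a b) (fun a b => u2s a b + P a b) σ1 σ2 →
        (∑ a, ∑ b, σ1 a * σ2 b * (u1s a b - P a b)) ≤ 0)
    ∧
    (∀ σ : RA → ℝ, IsDist σ → leaderValue u1s u2s σ (fun _ _ => 0) ≤ 0) := by
  constructor
  · intro P hP σ1 σ2 hNE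
    obtain ⟨⟨h1n, h1s⟩, ⟨h2n, h2s⟩, hbr1, hbr2⟩ := hNE
    rw [sumRA] at h1s
    rw [sumCA] at h2s
    have hq := h1n RA.Top
    have hs := h1n RA.Bottom
    have hpL := h2n CA.Left
    have hpM := h2n CA.Middle
    have hpR := h2n CA.Right
    simp only [mul_assoc, ← Finset.mul_sum]
    rw [sumRA]
    rcases hq.lt_or_eq with hq0 | hq0
    · -- Top in support: Top is best response, its value ≤ -1
      have h := hbr1 RA.Top hq0 RA.Bottom
      simp only at h
      have hrT : ∑ b, σ2 b * (u1s RA.Top b - P RA.Top b) ≤ -1 := by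
        rw [sumCA]
        simp only [u1s]
        nlinarith [mul_nonneg hpL (hP RA.Top CA.Left), mul_nonneg hpM (hP RA.Top CA.Middle),
          mul_nonneg hpR (hP RA.Top CA.Right)]
      have e1 := mul_le_mul_of_nonneg_left h hs
      have e2 := mul_le_mul_of_nonneg_left hrT hq
      have e3 := mul_le_mul_of_nonneg_left hrT hs
      linarith
    · -- σ1 Top = 0, σ1 Bottom = 1
      have hq1 : σ1 RA.Top = 0 := hq0.symm
      have hs1 : σ1 RA.Bottom = 1 := by linarith
      rw [hq1, hs1]
      rw [sumCA, sumCA]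
      simp only [u1s]
      rcases hpL.lt_or_eq with hpL0 | hpL0
      · have h := hbr2 CA.Left hpL0 CA.Middle
        rw [sumRA (fun a => σ1 a * _), sumRA (fun a => σ1 a * _)] at h
        simp only [u2s] at h
        rw [hq1, hs1] at h
        nlinarith [mul_nonneg hpL0.le (sub_nonneg.mpr h),
          mul_nonneg hpL0.le (hP RA.Bottom CA.Middle),
          mul_nonneg hpM (hP RA.Bottom CA.Middle), mul_nonneg hpR (hP RA.Bottom CA.Right)]
      · have hpL1 : σ2 CA.Left = 0 := hpL0.symm
        rw [hpL1]
        nlinarith [mul_nonneg hpM (hP RA.Bottom CA.Middle),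
          mul_nonneg hpR (hP RA.Bottom CA.Right)]
  · intro σ ⟨hn, hsum⟩
    rw [sumRA] at hsum
    set t := σ RA.Top
    set s := σ RA.Bottom
    have ht := hn RA.Top
    have hs := hn RA.Bottom
    apply Real.sSup_le _ le_rfl
    rintro x ⟨b, hmax, rfl⟩
    cases b with
    | Left =>
      have h := hmax CA.Right
      simp only [folU, leadU] at h ⊢
      rw [sumRA] at h ⊢
      rw [sumRA (fun a => σ a * _)] at h
      simp only [u1s, u2s] at h ⊢
      linarith
    | Middle =>
      simp only [leadU]
      rw [sumRA]
      simp only [u1s]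
      linarith
    | Right =>
      simp only [leadU]
      rw [sumRA]
      simp only [u1s]
      linarith
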